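/- No approval-based multi-winner voting rule can satisfy both perfect representation (PR) and strong support monotonicity with population increase (strong SMWPI). Concretely: in the election with k = 3, C = {c_1,...,c_5}, and 12 voters (2×{c_1,c_4}, 2×{c_1,c_5}, 3×{c_2,c_4}, 1×{c_2,c_5}, 2×{c_3,c_5}, 2×{c_3}), {c_1,c_2,c_3} is the unique committee providing PR; after adding 3 voters each approving {c_1,c_3}, the unique committee providing PR is {c_3,c_4,c_5}, which does not contain {c_1,c_3}. -/
import Mathlib


open Finset

/-- `W` provides perfect representation for the election `(A, k)`: the voters
can be partitioned into `k` groups of size `n/k` (the fibers of `g`), matched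
bijectively with the members of `W`, so that every voter approves her group's
candidate. -/
def providesPR {C : Type*} [DecidableEq C] {V : Type*} [Fintype V]
    (A : V → Finset C) (k : ℕ) (W : Finset C) : Prop :=
  W.card = k ∧ ∃ g : V → C, (∀ i, g i ∈ W ∧ g i ∈ A i) ∧
    ∀ c ∈ W, (univ.filter fun i => g i = c).card = Fintype.card V / k

/-- Candidates `c_1,…,c_5` are `0,…,4`.  The 12-voter profile:
2×{c_1,c_4}, 2×{c_1,c_5}, 3×{c_2,c_4}, 1×{c_2,c_5}, 2×{c_3,c_5}, 2×{c_3}. -/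
def A₁₆ : Fin 12 → Finset (Fin 5) := fun i =>
  if i.val < 2 then {0, 3} else if i.val < 4 then {0, 4}
  else if i.val < 7 then {1, 3} else if i.val < 8 then {1, 4}
  else if i.val < 10 then {2, 4} else {2}

/-- The profile after 3 new voters enter, each approving `{c_1, c_3}`. -/
def A₁₆' : Fin 15 → Finset (Fin 5) := fun i =>
  if h : i.val < 12 then A₁₆ ⟨i.val, h⟩ else {0, 2}

/-- If `x ∈ {a, b}`, `x ∈ W` and `a ∉ W`, then `x = b`. -/
lemma force_pair {W : Finset (Fin 5)} {x a b : Fin 5}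
    (hx : x ∈ ({a, b} : Finset (Fin 5))) (hxW : x ∈ W) (ha : a ∉ W) : x = b := by
  rcases (by simpa using hx : x = a ∨ x = b) with h | h
  · exact absurd (h ▸ hxW) ha
  · exact h

/-- No rule can satisfy perfect representation and strong SMWPI: in the original
election the unique PR committee of size 3 is `{c_1,c_2,c_3}`, so a PR rule
outputs exactly it; after 3 voters approving `G = {c_1,c_3} ⊆ {c_1,c_2,c_3}`
enter, the unique PR committee is `{c_3,c_4,c_5}`, which does not contain `G`. -/
theorem pr_incompatible_strong_SMWPI :
    (∀ W : Finset (Fin 5), providesPR A₁₆ 3 W ↔ W = {0, 1, 2}) ∧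
    (∀ W : Finset (Fin 5), providesPR A₁₆' 3 W ↔ W = {2, 3, 4}) ∧
    ¬ ({0, 2} : Finset (Fin 5)) ⊆ {2, 3, 4} := by
  refine ⟨fun W => ⟨?_, ?_⟩, fun W => ⟨?_, ?_⟩, by decide⟩
  · -- forward, 12 voters
    rintro ⟨hcard, g, hg, hcount⟩
    -- 2 ∈ W
    have hg10 : g 10 = 2 := by
      have h := (hg 10).2
      simpa using (show g 10 ∈ ({2} : Finset (Fin 5)) from h)
    have h2W : (2 : Fin 5) ∈ W := hg10 ▸ (hg 10).1
    -- 1 ∈ W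
    have h1W : (1 : Fin 5) ∈ W := by
      by_contra h1
      have e4 : g 4 = 3 :=
        force_pair (show g 4 ∈ ({1, 3} : Finset (Fin 5)) from (hg 4).2) (hg 4).1 h1
      have e5 : g 5 = 3 :=
        force_pair (show g 5 ∈ ({1, 3} : Finset (Fin 5)) from (hg 5).2) (hg 5).1 h1
      have e6 : g 6 = 3 :=
        force_pair (show g 6 ∈ ({1, 3} : Finset (Fin 5)) from (hg 6).2) (hg 6).1 h1
      have e7 : g 7 = 4 :=
        force_pair (show g 7 ∈ ({1, 4} : Finset (Fin 5)) from (hg 7).2) (hg 7).1 h1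
      have h3W : (3 : Fin 5) ∈ W := e4 ▸ (hg 4).1
      have h4W : (4 : Fin 5) ∈ W := e7 ▸ (hg 7).1
      have hsub : ({2, 3, 4} : Finset (Fin 5)) ⊆ W := by
        intro x hx
        rcases (by simpa using hx : x = 2 ∨ x = 3 ∨ x = 4) with h | h | h <;>
          simp [h, h2W, h3W, h4W]
      have hWeq : W = {2, 3, 4} :=
        (Finset.eq_of_subset_of_card_le hsub (by rw [hcard]; decide)).symm
      have h0 : (0 : Fin 5) ∉ W := by rw [hWeq]; decide
      have e0 : g 0 = 3 :=
        force_pair (show g 0 ∈ ({0, 3} : Finset (Fin 5)) from (hg 0).2) (hg 0).1 h0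
      have e1 : g 1 = 3 :=
        force_pair (show g 1 ∈ ({0, 3} : Finset (Fin 5)) from (hg 1).2) (hg 1).1 h0
      have hbig : ({0, 1, 4, 5, 6} : Finset (Fin 12)) ⊆
          (univ.filter fun i => g i = 3) := by
        intro i hi
        rcases (by simpa using hi : i = 0 ∨ i = 1 ∨ i = 4 ∨ i = 5 ∨ i = 6) with
          h | h | h | h | h <;> subst h <;> simp [mem_filter, e0, e1, e4, e5, e6]
      have hle := Finset.card_le_card hbig
      rw [hcount 3 h3W] at hle
      rw [show ({0, 1, 4, 5, 6} : Finset (Fin 12)).card = 5 from by decide] at hle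
      rw [show Fintype.card (Fin 12) / 3 = 4 from by decide] at hle
      omega
    -- 0 ∈ W
    have h0W : (0 : Fin 5) ∈ W := by
      by_contra h0
      have e0 : g 0 = 3 :=
        force_pair (show g 0 ∈ ({0, 3} : Finset (Fin 5)) from (hg 0).2) (hg 0).1 h0
      have e2 : g 2 = 4 :=
        force_pair (show g 2 ∈ ({0, 4} : Finset (Fin 5)) from (hg 2).2) (hg 2).1 h0
      have h3W : (3 : Fin 5) ∈ W := e0 ▸ (hg 0).1
      have h4W : (4 : Fin 5) ∈ W := e2 ▸ (hg 2).1
      have hsub : ({1, 2, 3, 4} : Finset (Fin 5)) ⊆ W := by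
        intro x hx
        rcases (by simpa using hx : x = 1 ∨ x = 2 ∨ x = 3 ∨ x = 4) with
          h | h | h | h <;> simp [h, h1W, h2W, h3W, h4W]
      have hle := Finset.card_le_card hsub
      rw [hcard] at hle
      rw [show ({1, 2, 3, 4} : Finset (Fin 5)).card = 4 from by decide] at hle
      omega
    have hsub : ({0, 1, 2} : Finset (Fin 5)) ⊆ W := by
      intro x hx
      rcases (by simpa using hx : x = 0 ∨ x = 1 ∨ x = 2) with h | h | h <;>
        simp [h, h0W, h1W, h2W]
    exact (Finset.eq_of_subset_of_card_le hsub (by rw [hcard]; decide)).symm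
  · -- backward, 12 voters
    rintro rfl
    refine ⟨by decide,
      (fun i => if i.val < 4 then 0 else if i.val < 8 then 1 else 2), ?_, ?_⟩
    · decide
    · decide
  · -- forward, 15 voters
    rintro ⟨hcard, g, hg, hcount⟩
    -- 2 ∈ W
    have hg10 : g 10 = 2 := by
      have h := (hg 10).2
      simpa using (show g 10 ∈ ({2} : Finset (Fin 5)) from h)
    have h2W : (2 : Fin 5) ∈ W := hg10 ▸ (hg 10).1
    -- 1 ∉ W
    have h1W : (1 : Fin 5) ∉ W := by
      intro h1
      have key : ∀ i : Fin 15, (1 : Fin 5) ∈ A₁₆' i →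
          i ∈ ({4, 5, 6, 7} : Finset (Fin 15)) := by decide
      have hsub : (univ.filter fun i => g i = 1) ⊆ ({4, 5, 6, 7} : Finset (Fin 15)) := by
        intro i hi
        have hgi : g i = 1 := (mem_filter.mp hi).2
        exact key i (hgi ▸ (hg i).2)
      have hle := Finset.card_le_card hsub
      rw [hcount 1 h1] at hle
      rw [show ({4, 5, 6, 7} : Finset (Fin 15)).card = 4 from by decide] at hle
      rw [show Fintype.card (Fin 15) / 3 = 5 from by decide] at hle
      omega
    -- 3 ∈ W
    have h3W : (3 : Fin 5) ∈ W := by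
      have e4 : g 4 = 3 :=
        force_pair (show g 4 ∈ ({1, 3} : Finset (Fin 5)) from (hg 4).2) (hg 4).1 h1W
      exact e4 ▸ (hg 4).1
    -- 4 ∈ W
    have h4W : (4 : Fin 5) ∈ W := by
      have e7 : g 7 = 4 :=
        force_pair (show g 7 ∈ ({1, 4} : Finset (Fin 5)) from (hg 7).2) (hg 7).1 h1W
      exact e7 ▸ (hg 7).1
    have hsub : ({2, 3, 4} : Finset (Fin 5)) ⊆ W := by
      intro x hx
      rcases (by simpa using hx : x = 2 ∨ x = 3 ∨ x = 4) with h | h | h <;>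
        simp [h, h2W, h3W, h4W]
    exact (Finset.eq_of_subset_of_card_le hsub (by rw [hcard]; decide)).symm
  · -- backward, 15 voters
    rintro rfl
    refine ⟨by decide,
      (fun i => if i.val < 2 then 3 else if i.val < 4 then 4 else
        if i.val < 7 then 3 else if i.val < 10 then 4 else 2), ?_, ?_⟩
    · decide
    · decide
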